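/- Let P, Q, P̂ be orthogonal projections on a Hilbert space H such that Q P Q ≤ P̂ and P̂ ≤ Q (in the sense of positive operators, equivalently inclusion of ranges for projections). Then P ≤ P̂ + (I − Q), where I is the identity operator. -/

import Mathlib

open ContinuousLinearMap
open scoped InnerProductSpace

section Aux
variable {H : Type*} [NormedAddCommGroup H] [InnerProductSpace ℂ H] [CompleteSpace H]

/-- For a self-adjoint idempotent `E`, `re ⟪E x, x⟫ = ‖E x‖ ^ 2`. -/
lemma aux_proj_re (E : H →L[ℂ] H) (hsa : IsSelfAdjoint E) (hid : E * E = E) (x : H) :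
    RCLike.re ⟪E x, x⟫_ℂ = ‖E x‖ ^ 2 := by
  have hadj : ContinuousLinearMap.adjoint E = E := hsa.adjoint_eq
  have key := ContinuousLinearMap.adjoint_inner_left E x (E x)
  rw [hadj] at key
  have h1 : E x = E (E x) := by
    conv_lhs => rw [← hid]
    rw [ContinuousLinearMap.mul_apply]
  calc RCLike.re ⟪E x, x⟫_ℂ = RCLike.re ⟪E (E x), x⟫_ℂ := by rw [← h1]
    _ = RCLike.re ⟪E x, E x⟫_ℂ := by rw [key]
    _ = ‖E x‖ ^ 2 := by rw [inner_self_eq_norm_sq]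

end Aux

theorem stmt0 {H : Type*} [NormedAddCommGroup H] [InnerProductSpace ℂ H] [CompleteSpace H]
    (P Q Phat : H →L[ℂ] H)
    (hPsa : IsSelfAdjoint P) (hPidem : P ∘L P = P)
    (hQsa : IsSelfAdjoint Q) (hQidem : Q ∘L Q = Q)
    (hPhatsa : IsSelfAdjoint Phat) (hPhatidem : Phat ∘L Phat = Phat)
    (h1 : (Phat - Q ∘L P ∘L Q).IsPositive)
    (h2 : (Q - Phat).IsPositive) :
    ((Phat + (1 - Q)) - P).IsPositive := by
  have hone : IsSelfAdjoint (1 : H →L[ℂ] H) := IsSelfAdjoint.one (H →L[ℂ] H)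
  have hPm : P * P = P := hPidem
  have hQm : Q * Q = Q := hQidem
  have hPhm : Phat * Phat = Phat := hPhatidem
  have hQ1sa : IsSelfAdjoint (1 - Q : H →L[ℂ] H) := hone.sub hQsa
  have hQ1idem : (1 - Q : H →L[ℂ] H) * (1 - Q) = 1 - Q := by
    rw [sub_mul, mul_sub, mul_sub, one_mul, mul_one, hQm]; abel
  -- Step 1 : (1 - Q) * Phat = 0
  have e1m : (1 - Q) * Phat = 0 := by
    ext ψ
    show (1 - Q) (Phat ψ) = 0
    set x := Phat ψ with hxdef
    have hx : Phat x = x := by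
      show (Phat * Phat) ψ = Phat ψ
      rw [hPhm]
    have hpos := h2.2 x
    rw [ContinuousLinearMap.reApplyInnerSelf_apply, ContinuousLinearMap.sub_apply, hx,
      inner_sub_left, map_sub] at hpos
    have hnorm : ‖(1 - Q) x‖ ^ 2 = RCLike.re ⟪(1 - Q) x, x⟫_ℂ :=
      (aux_proj_re _ hQ1sa hQ1idem x).symm
    have hre : RCLike.re ⟪(1 - Q) x, x⟫_ℂ = RCLike.re (⟪x, x⟫_ℂ) - RCLike.re ⟪Q x, x⟫_ℂ := by
      rw [ContinuousLinearMap.sub_apply, ContinuousLinearMap.one_apply, inner_sub_left, map_sub]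
    have hle : ‖(1 - Q) x‖ ^ 2 ≤ 0 := by rw [hnorm, hre]; linarith
    have := norm_nonneg ((1 - Q) x)
    have h0 : ‖(1 - Q) x‖ = 0 := by nlinarith
    exact norm_eq_zero.mp h0
  -- Step 2 : P * Q * (1 - Phat) = 0
  have e2m : P * Q * (1 - Phat) = 0 := by
    ext ψ
    show P (Q ((1 - Phat) ψ)) = 0
    set x := (1 - Phat) ψ with hxdef
    have hPhx : Phat x = 0 := by
      have h0 : Phat * (1 - Phat) = 0 := by rw [mul_sub, mul_one, hPhm, sub_self]
      calc Phat x = (Phat * (1 - Phat)) ψ := rfl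
        _ = 0 := by rw [h0]; rfl
    have hpos := h1.2 x
    rw [ContinuousLinearMap.reApplyInnerSelf_apply, ContinuousLinearMap.sub_apply,
      inner_sub_left, map_sub] at hpos
    have hL : RCLike.re ⟪Phat x, x⟫_ℂ = 0 := by rw [hPhx]; simp
    have hQadj : ContinuousLinearMap.adjoint Q = Q := hQsa.adjoint_eq
    have key := ContinuousLinearMap.adjoint_inner_left Q x (P (Q x))
    rw [hQadj] at key
    have hR : RCLike.re ⟪(Q ∘L P ∘L Q) x, x⟫_ℂ = ‖P (Q x)‖ ^ 2 := by
      have hc : (Q ∘L P ∘L Q) x = Q (P (Q x)) := rfl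
      rw [hc, key]
      exact aux_proj_re P hPsa hPm (Q x)
    have hle : ‖P (Q x)‖ ^ 2 ≤ 0 := by rw [← hR]; linarith
    have := norm_nonneg (P (Q x))
    have h0 : ‖P (Q x)‖ = 0 := by nlinarith
    exact norm_eq_zero.mp h0
  -- algebraic consequences
  have qph : Q * Phat = Phat := by
    have h := e1m
    rw [sub_mul, one_mul, sub_eq_zero] at h
    exact h.symm
  have phq : Phat * Q = Phat := by
    have h := congrArg star qph
    rw [star_mul, hQsa.star_eq, hPhatsa.star_eq] at h
    exact h
  have pq : P * Q * Phat = P * Q := by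
    have h := e2m
    rw [mul_sub, mul_one, sub_eq_zero] at h
    exact h.symm
  have qp : Phat * (Q * P) = Q * P := by
    have h := congrArg star pq
    rw [star_mul, star_mul, hPsa.star_eq, hQsa.star_eq, hPhatsa.star_eq] at h
    exact h
  have e4 : Phat * P = Q * P := by
    calc Phat * P = Phat * Q * P := by rw [phq]
      _ = Phat * (Q * P) := by rw [mul_assoc]
      _ = Q * P := qp
  have e4' : P * Phat = P * Q := by
    have h := congrArg star e4
    rw [star_mul, star_mul, hPsa.star_eq, hQsa.star_eq, hPhatsa.star_eq] at h
    exact h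
  -- conclusion
  set D : H →L[ℂ] H := (Phat + (1 - Q)) - P with hD
  have hDsa : IsSelfAdjoint D := (hPhatsa.add (hone.sub hQsa)).sub hPsa
  have hDD : D * D = D := by
    rw [hD]
    simp only [sub_mul, mul_sub, add_mul, mul_add, one_mul, mul_one]
    simp only [hPhm, hQm, hPm, qph, phq, e4, e4']
    abel
  refine ⟨hDsa.isSymmetric, fun x => ?_⟩
  rw [ContinuousLinearMap.reApplyInnerSelf_apply, aux_proj_re D hDsa hDD x]
  positivity
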